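/- For every index i, the function h ↦ CN_1(h)_i − u_ex(h)_i is O(h²) as h → 0 from the right; i.e., the one-stage constant-neighbour method has local truncation error of order two, so it is a first-order method. -/

import Mathlib

open Finset NormedSpace Asymptotics

/-- `aCoef M Q v i = Σ_{j≠i} M_ij v_j + Q_i`. -/
noncomputable def aCoef {N : ℕ} (M : Matrix (Fin N) (Fin N) ℝ) (Q : Fin N → ℝ)
    (v : Fin N → ℝ) (i : Fin N) : ℝ :=
  (∑ j ∈ Finset.univ.erase i, M i j * v j) + Q i

/-- The constant-neighbour step `F_h`. -/
noncomputable def cnStep {N : ℕ} (M : Matrix (Fin N) (Fin N) ℝ) (Q u0 : Fin N → ℝ)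
    (h : ℝ) (v : Fin N → ℝ) : Fin N → ℝ :=
  fun i => u0 i * Real.exp (M i i * h)
    + (aCoef M Q v i / (-(M i i))) * (1 - Real.exp (M i i * h))

/-- The `k`-stage constant-neighbour approximation `CN_k(h) = F_h^[k] u⁰`. -/
noncomputable def CN {N : ℕ} (M : Matrix (Fin N) (Fin N) ℝ) (Q u0 : Fin N → ℝ)
    (k : ℕ) (h : ℝ) : Fin N → ℝ :=
  (cnStep M Q u0 h)^[k] u0

/-- The effective slope `s_i(v) = (a_i(v) − a_i(u⁰))/h`. -/
noncomputable def sCoef {N : ℕ} (M : Matrix (Fin N) (Fin N) ℝ) (Q u0 : Fin N → ℝ)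
    (h : ℝ) (v : Fin N → ℝ) (i : Fin N) : ℝ :=
  (aCoef M Q v i - aCoef M Q u0 i) / h

/-- The linear-neighbour step `G_h`, with `τ_i = −1/M_ii`. -/
noncomputable def lnStep {N : ℕ} (M : Matrix (Fin N) (Fin N) ℝ) (Q u0 : Fin N → ℝ)
    (h : ℝ) (v : Fin N → ℝ) : Fin N → ℝ :=
  fun i =>
    u0 i * Real.exp (M i i * h)
      + (aCoef M Q u0 i * (-(M i i)⁻¹) - sCoef M Q u0 h v i * (-(M i i)⁻¹) ^ 2)
          * (1 - Real.exp (M i i * h))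
      + sCoef M Q u0 h v i * (-(M i i)⁻¹) * h

/-- The `k`-stage linear-neighbour approximation `LN_k(h) = G_h^[k−1] (CN_1(h))`, `k ≥ 2`. -/
noncomputable def LN {N : ℕ} (M : Matrix (Fin N) (Fin N) ℝ) (Q u0 : Fin N → ℝ)
    (k : ℕ) (h : ℝ) : Fin N → ℝ :=
  (lnStep M Q u0 h)^[k - 1] (cnStep M Q u0 h u0)

/-- The exact solution `u_ex(h) = e^{hM} u⁰ + ∫₀^h e^{(h−s)M} Q ds`. -/
noncomputable def uex {N : ℕ} (M : Matrix (Fin N) (Fin N) ℝ) (Q u0 : Fin N → ℝ)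
    (h : ℝ) : Fin N → ℝ :=
  (exp (h • M)).mulVec u0 + ∫ s in (0:ℝ)..h, (exp ((h - s) • M)).mulVec Q


lemma aux_bigO {g g' : ℝ → ℝ} (hg : ∀ t, HasDerivAt g (g' t) t)
    (h0 : g 0 = 0) (hO : g' =O[nhds 0] fun t => t) :
    g =O[nhdsWithin 0 (Set.Ioi 0)] fun h => h ^ 2 := by
  obtain ⟨C, hC⟩ := hO.bound
  rw [Metric.eventually_nhds_iff] at hC
  obtain ⟨ε, hε, hball⟩ := hC
  rw [Asymptotics.isBigO_iff]
  refine ⟨|C|, ?_⟩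
  filter_upwards [Ioo_mem_nhdsGT_of_mem (by exact ⟨le_refl 0, hε⟩ : (0:ℝ) ∈ Set.Ico 0 ε)]
    with h hh
  obtain ⟨hh0, hhε⟩ := hh
  have bound : ∀ t ∈ Set.Icc (0:ℝ) h, ‖g' t‖ ≤ |C| * h := by
    intro t ht
    have h1 : dist t 0 < ε := by
      rw [Real.dist_eq, sub_zero, abs_of_nonneg ht.1]
      exact lt_of_le_of_lt ht.2 hhε
    calc ‖g' t‖ ≤ C * ‖t‖ := hball h1
      _ ≤ |C| * ‖t‖ := by
          exact mul_le_mul_of_nonneg_right (le_abs_self C) (norm_nonneg t)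
      _ ≤ |C| * h := by
          rw [Real.norm_eq_abs, abs_of_nonneg ht.1]
          exact mul_le_mul_of_nonneg_left ht.2 (abs_nonneg C)
  have key := Convex.norm_image_sub_le_of_norm_hasDerivWithin_le
    (f := g) (f' := g') (s := Set.Icc 0 h)
    (fun t _ => (hg t).hasDerivWithinAt) bound (convex_Icc 0 h)
    (Set.left_mem_Icc.2 hh0.le) (Set.right_mem_Icc.2 hh0.le)
  rw [h0, sub_zero, sub_zero] at key
  calc ‖g h‖ ≤ |C| * h * ‖h‖ := key
    _ = |C| * ‖h ^ 2‖ := by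
        rw [Real.norm_eq_abs, Real.norm_eq_abs, abs_of_nonneg hh0.le, abs_of_nonneg (sq_nonneg h)]
        ring


attribute [local instance] Matrix.linftyOpNormedRing Matrix.linftyOpNormedAlgebra

noncomputable def mulVecCLM {N : ℕ} (q : Fin N → ℝ) :
    Matrix (Fin N) (Fin N) ℝ →L[ℝ] (Fin N → ℝ) :=
  LinearMap.toContinuousLinearMap
    { toFun := fun A => A.mulVec q
      map_add' := fun A B => Matrix.add_mulVec A B q
      map_smul' := fun c A => Matrix.smul_mulVec c A q }

@[simp] lemma mulVecCLM_apply {N : ℕ} (q : Fin N → ℝ) (A : Matrix (Fin N) (Fin N) ℝ) :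
    mulVecCLM q A = A.mulVec q := rfl

noncomputable def mulMulVecCLM {N : ℕ} (M : Matrix (Fin N) (Fin N) ℝ) (q : Fin N → ℝ) :
    Matrix (Fin N) (Fin N) ℝ →L[ℝ] (Fin N → ℝ) :=
  LinearMap.toContinuousLinearMap
    { toFun := fun A => (A * M).mulVec q
      map_add' := fun A B => by simp [add_mul, Matrix.add_mulVec]
      map_smul' := fun c A => by simp [smul_mul_assoc, Matrix.smul_mulVec] }

@[simp] lemma mulMulVecCLM_apply {N : ℕ} (M : Matrix (Fin N) (Fin N) ℝ) (q : Fin N → ℝ)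
    (A : Matrix (Fin N) (Fin N) ℝ) : mulMulVecCLM M q A = (A * M).mulVec q := rfl

lemma hasDerivAt_exp_mulVec {N : ℕ} (M : Matrix (Fin N) (Fin N) ℝ) (q : Fin N → ℝ) (t : ℝ) :
    HasDerivAt (fun h : ℝ => (exp (h • M)).mulVec q)
      ((exp (t • M) * M).mulVec q) t := by
  exact (mulVecCLM q).hasFDerivAt.comp_hasDerivAt t (hasDerivAt_exp_smul_const M t)

lemma hasDerivAt_exp_mul_mulVec {N : ℕ} (M : Matrix (Fin N) (Fin N) ℝ) (q : Fin N → ℝ) (t : ℝ) :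
    HasDerivAt (fun h : ℝ => (exp (h • M) * M).mulVec q)
      ((exp (t • M) * M * M).mulVec q) t := by
  exact (mulMulVecCLM M q).hasFDerivAt.comp_hasDerivAt t (hasDerivAt_exp_smul_const M t)

lemma cont_exp_mulVec {N : ℕ} (M : Matrix (Fin N) (Fin N) ℝ) (q : Fin N → ℝ) :
    Continuous (fun t : ℝ => (exp (t • M)).mulVec q) :=
  (mulVecCLM q).continuous.comp (exp_continuous.comp (continuous_id.smul continuous_const))

noncomputable def aCoef' {N : ℕ} (M : Matrix (Fin N) (Fin N) ℝ) (Q : Fin N → ℝ)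
    (v : Fin N → ℝ) (i : Fin N) : ℝ :=
  (∑ j ∈ Finset.univ.erase i, M i j * v j) + Q i

/-- The integral in uex rewritten. -/
lemma uex_eq {N : ℕ} (M : Matrix (Fin N) (Fin N) ℝ) (Q u0 : Fin N → ℝ) (h : ℝ) :
    (fun i => (exp (h • M)).mulVec u0 i
        + (∫ s in (0:ℝ)..h, (exp ((h - s) • M)).mulVec Q) i)
      = fun i => (exp (h • M)).mulVec u0 i
        + (∫ t in (0:ℝ)..h, (exp (t • M)).mulVec Q) i := by
  have := intervalIntegral.integral_comp_sub_left
    (a := (0:ℝ)) (b := h) (fun t : ℝ => (exp (t • M)).mulVec Q) h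
  simp only [sub_self, sub_zero] at this
  rw [this]

section Main
variable {N : ℕ} (M : Matrix (Fin N) (Fin N) ℝ) (Q u0 : Fin N → ℝ) (i : Fin N)

noncomputable def gFun (h : ℝ) : ℝ :=
  (u0 i * Real.exp (M i i * h)
    + (aCoef' M Q u0 i / (-(M i i))) * (1 - Real.exp (M i i * h)))
  - ((exp (h • M)).mulVec u0 i
      + (∫ t in (0:ℝ)..h, (exp (t • M)).mulVec Q) i)

noncomputable def gDer (h : ℝ) : ℝ :=
  (u0 i * (Real.exp (M i i * h) * M i i)
    - (aCoef' M Q u0 i / (-(M i i))) * (Real.exp (M i i * h) * M i i))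
  - ((exp (h • M) * M).mulVec u0 i + (exp (h • M)).mulVec Q i)

lemma hasDerivAt_gFun (t : ℝ) : HasDerivAt (gFun M Q u0 i) (gDer M Q u0 i t) t := by
  have hexp : HasDerivAt (fun h : ℝ => Real.exp (M i i * h))
      (Real.exp (M i i * t) * M i i) t := by
    simpa using ((hasDerivAt_id t).const_mul (M i i)).exp
  have h1 : HasDerivAt (fun h : ℝ => u0 i * Real.exp (M i i * h)
      + (aCoef' M Q u0 i / (-(M i i))) * (1 - Real.exp (M i i * h)))
      (u0 i * (Real.exp (M i i * t) * M i i)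
        - (aCoef' M Q u0 i / (-(M i i))) * (Real.exp (M i i * t) * M i i)) t := by
    have := (hexp.const_mul (u0 i)).add
      (((hasDerivAt_const t (1:ℝ)).sub hexp).const_mul (aCoef' M Q u0 i / (-(M i i))))
    exact this.congr_deriv (by ring)
  have h2 : HasDerivAt (fun h : ℝ => (exp (h • M)).mulVec u0 i)
      ((exp (t • M) * M).mulVec u0 i) t := by
    simpa [Function.comp_def] using (ContinuousLinearMap.proj i).hasFDerivAt.comp_hasDerivAt t
      (hasDerivAt_exp_mulVec M u0 t)
  have h3 : HasDerivAt (fun h : ℝ => (∫ s in (0:ℝ)..h, (exp (s • M)).mulVec Q) i)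
      ((exp (t • M)).mulVec Q i) t := by
    simpa [Function.comp_def] using (ContinuousLinearMap.proj i).hasFDerivAt.comp_hasDerivAt t
      ((cont_exp_mulVec M Q).integral_hasStrictDerivAt 0 t).hasDerivAt
  exact h1.sub (h2.add h3)

lemma hasDerivAt_gDer : ∃ d, HasDerivAt (gDer M Q u0 i) d 0 := by
  have hexp : HasDerivAt (fun h : ℝ => Real.exp (M i i * h))
      (Real.exp (M i i * 0) * M i i) 0 := by
    simpa using ((hasDerivAt_id 0).const_mul (M i i)).exp
  have h2 : HasDerivAt (fun h : ℝ => (exp (h • M) * M).mulVec u0 i)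
      ((exp ((0:ℝ) • M) * M * M).mulVec u0 i) 0 := by
    simpa [Function.comp_def] using (ContinuousLinearMap.proj i).hasFDerivAt.comp_hasDerivAt 0
      (hasDerivAt_exp_mul_mulVec M u0 0)
  have h3 : HasDerivAt (fun h : ℝ => (exp (h • M)).mulVec Q i)
      ((exp ((0:ℝ) • M) * M).mulVec Q i) 0 := by
    simpa [Function.comp_def] using (ContinuousLinearMap.proj i).hasFDerivAt.comp_hasDerivAt 0
      (hasDerivAt_exp_mulVec M Q 0)
  exact ⟨_, (((hexp.mul_const (M i i)).const_mul (u0 i)).sub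
    ((hexp.mul_const (M i i)).const_mul (aCoef' M Q u0 i / (-(M i i))))).sub (h2.add h3)⟩

lemma gFun_zero : gFun M Q u0 i 0 = 0 := by
  simp [gFun, Matrix.one_mulVec]

lemma gDer_zero (hMii : M i i < 0) : gDer M Q u0 i 0 = 0 := by
  have hm : M i i ≠ 0 := ne_of_lt hMii
  have hsum : M.mulVec u0 i = M i i * u0 i + ∑ j ∈ Finset.univ.erase i, M i j * u0 j := by
    rw [Matrix.mulVec, dotProduct]
    exact (Finset.add_sum_erase Finset.univ (fun j => M i j * u0 j) (Finset.mem_univ i)).symm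
  have ha : aCoef' M Q u0 i / (-(M i i)) * M i i = -aCoef' M Q u0 i := by
    rw [div_mul_eq_mul_div, div_neg, mul_div_cancel_right₀ _ hm]
  simp only [gDer, zero_smul, exp_zero, mul_zero, Real.exp_zero, one_mul, mul_one,
    Matrix.one_mul, Matrix.one_mulVec]
  rw [hsum, ha, aCoef']
  ring
end Main


/-- The one-stage constant-neighbour method has local truncation error `O(h²)`
as `h → 0⁺`, i.e. it is a first-order method. -/
theorem cn1_first_order {N : ℕ} (hN : 1 ≤ N) (M : Matrix (Fin N) (Fin N) ℝ)
    (hM : ∀ i, M i i < 0) (Q u0 : Fin N → ℝ) (i : Fin N) :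
    (fun h : ℝ => CN M Q u0 1 h i - uex M Q u0 h i)
      =O[nhdsWithin 0 (Set.Ioi 0)] fun h : ℝ => h ^ 2 := by
  have hfun : (fun h : ℝ => CN M Q u0 1 h i - uex M Q u0 h i) = gFun M Q u0 i := by
    funext h
    have hint : (∫ s in (0:ℝ)..h, (exp ((h - s) • M)).mulVec Q)
        = ∫ t in (0:ℝ)..h, (exp (t • M)).mulVec Q := by
      have := intervalIntegral.integral_comp_sub_left
        (a := (0:ℝ)) (b := h) (fun t : ℝ => (exp (t • M)).mulVec Q) h
      simpa using this
    simp only [CN, Function.iterate_one, cnStep, uex, gFun, Pi.add_apply, hint]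
    rfl
  rw [hfun]
  obtain ⟨d, hd⟩ := hasDerivAt_gDer M Q u0 i
  have hO : gDer M Q u0 i =O[nhds 0] fun t => t := by
    have := hd.hasFDerivAt.isBigO_sub
    simpa [gDer_zero M Q u0 i (hM i)] using this
  exact aux_bigO (hasDerivAt_gFun M Q u0 i) (gFun_zero M Q u0 i) hO
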